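/- Let H be a complex Hilbert space and 𝔹_H its open unit ball. Then the Drury–Arveson-type kernel (x,y) ↦ 1/(1 − ⟨x,y⟩_H) is strictly positive definite on 𝔹_H × 𝔹_H. -/

import Mathlib

open scoped ComplexOrder ComplexConjugate InnerProductSpace

/-- Monomial feature map on Euclidean space. -/
noncomputable def daFeat (d m : ℕ) (a : EuclideanSpace ℂ (Fin d)) :
    EuclideanSpace ℂ (Fin m → Fin d) :=
  WithLp.toLp 2 (fun k => ∏ t, a (k t))

lemma daFeat_inner (d m : ℕ) (a b : EuclideanSpace ℂ (Fin d)) :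
    ⟪daFeat d m a, daFeat d m b⟫_ℂ = ⟪a, b⟫_ℂ ^ m := by
  simp only [PiLp.inner_apply, RCLike.inner_apply, daFeat, PiLp.toLp_apply]
  rw [Finset.sum_pow']
  rw [Fintype.piFinset_univ]
  refine Finset.sum_congr rfl fun k _ => ?_
  rw [map_prod, ← Finset.prod_mul_distrib]

/-- `k` is strictly positive definite on a subset `S` of `X`. -/
def IsStrictPosKernelOn {X : Type*} (S : Set X) (k : X → X → ℂ) : Prop :=
  ∀ (n : ℕ) (x : Fin n → X), (∀ i, x i ∈ S) → Function.Injective x →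
    ∀ c : Fin n → ℂ, c ≠ 0 →
      0 < ∑ i, ∑ j, c i * conj (c j) * k (x i) (x j)

lemma exists_inner_injective {E : Type*} [NormedAddCommGroup E] [InnerProductSpace ℂ E]
    {n : ℕ} (u : Fin n → E) (hu : Function.Injective u) :
    ∃ y : E, Function.Injective fun i => ⟪y, u i⟫_ℂ := by
  by_contra h
  push_neg at h
  simp only [Function.not_injective_iff] at h
  have hcover : (⋃ q : {p : Fin n × Fin n // p.1 ≠ p.2},
      ((LinearMap.ker (innerₛₗ ℂ (u q.1.1 - u q.1.2)) : Submodule ℂ E) : Set E)) = Set.univ := by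
    refine Set.eq_univ_iff_forall.2 fun y => ?_
    obtain ⟨a, b, hab, hne⟩ := h y
    refine Set.mem_iUnion.2 ⟨⟨(a, b), hne⟩, ?_⟩
    simp only [SetLike.mem_coe, LinearMap.mem_ker, innerₛₗ_apply_apply, inner_sub_left]
    have : ⟪u a, y⟫_ℂ = ⟪u b, y⟫_ℂ := by
      have := congrArg (starRingEnd ℂ) hab
      simpa [inner_conj_symm] using this
    rw [this, sub_self]
  obtain ⟨q, hq⟩ := Subspace.exists_eq_top_of_iUnion_eq_univ hcover
  have hv : u q.1.1 - u q.1.2 = 0 := by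
    have : u q.1.1 - u q.1.2 ∈ LinearMap.ker (innerₛₗ ℂ (u q.1.1 - u q.1.2)) := by
      rw [hq]; trivial
    rw [LinearMap.mem_ker, innerₛₗ_apply_apply, inner_self_eq_zero] at this
    exact this
  exact q.2 (hu (sub_eq_zero.1 hv))

/-- The Drury–Arveson-type kernel `(x,y) ↦ 1/(1 − ⟨x,y⟩)` is strictly positive definite
on the open unit ball of a complex Hilbert space.  (Here `⟪y, x⟫_ℂ` is linear in `x`,
matching the paper's inner product `⟨x, y⟩` which is linear in the first variable.) -/
theorem druryArveson_isStrictPosKernel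
    {H : Type*} [NormedAddCommGroup H] [InnerProductSpace ℂ H] [CompleteSpace H] :
    IsStrictPosKernelOn {x : H | ‖x‖ < 1}
      (fun x y : H => (1 - ⟪y, x⟫_ℂ)⁻¹) := by
  intro n x hx hxinj c hc
  simp only [Set.mem_setOf_eq] at hx
  -- reduce to Euclidean space
  set V : Submodule ℂ H := Submodule.span ℂ (Set.range x) with hV
  haveI : FiniteDimensional ℂ V := FiniteDimensional.span_of_finite ℂ (Set.finite_range x)
  set d : ℕ := Module.finrank ℂ V with hd
  let b := stdOrthonormalBasis ℂ V
  set u : Fin n → EuclideanSpace ℂ (Fin d) :=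
    fun i => b.repr ⟨x i, Submodule.subset_span ⟨i, rfl⟩⟩ with hu
  have hinner : ∀ i j, ⟪u i, u j⟫_ℂ = ⟪x i, x j⟫_ℂ := by
    intro i j
    rw [hu]
    rw [b.repr.inner_map_map]
    rfl
  have huinj : Function.Injective u := by
    intro i j hij
    apply hxinj
    have := b.repr.injective hij
    exact congrArg Subtype.val this
  set g : Fin n → Fin n → ℂ := fun i j => ⟪x j, x i⟫_ℂ with hgdef
  have hg : ∀ i j, ‖g i j‖ < 1 := by
    intro i j
    calc ‖g i j‖ ≤ ‖x j‖ * ‖x i‖ := norm_inner_le_norm _ _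
      _ < 1 * 1 := by
          apply mul_lt_mul_of_nonneg_of_pos (hx j) (le_of_lt (hx i)) (norm_nonneg _)
          exact one_pos
      _ = 1 := mul_one 1
  -- the squared norms
  set w : (m : ℕ) → EuclideanSpace ℂ (Fin m → Fin d) :=
    fun m => ∑ i, c i • daFeat d m (u i) with hw
  have hQ : ∀ m : ℕ, (∑ i, ∑ j, c i * conj (c j) * g i j ^ m)
      = ((‖w m‖ ^ 2 : ℝ) : ℂ) := by
    intro m
    have hnorm : ⟪w m, w m⟫_ℂ = ((‖w m‖ ^ 2 : ℝ) : ℂ) := by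
      rw [inner_self_eq_norm_sq_to_K]; norm_cast
    rw [← hnorm, hw]
    rw [sum_inner]
    rw [Finset.sum_comm]
    refine Finset.sum_congr rfl fun i _ => ?_
    rw [inner_sum]
    refine Finset.sum_congr rfl fun j _ => ?_
    rw [inner_smul_left, inner_smul_right, daFeat_inner, hinner]
    simp only [hgdef]
    ring
  -- strictness: some w m is nonzero
  have hkey : ∃ m : ℕ, w m ≠ 0 := by
    by_contra hall
    push_neg at hall
    obtain ⟨y, hy⟩ := exists_inner_injective u huinj
    have hz : ∀ m : ℕ, ∑ i, c i * ⟪y, u i⟫_ℂ ^ m = 0 := by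
      intro m
      have h0 : ⟪daFeat d m y, w m⟫_ℂ = 0 := by rw [hall m, inner_zero_right]
      rw [hw, inner_sum] at h0
      rw [← h0]
      refine Finset.sum_congr rfl fun i _ => ?_
      rw [inner_smul_right, daFeat_inner]
    set z : Fin n → ℂ := fun i => ⟪y, u i⟫_ℂ with hzdef
    have hmv : (Matrix.vandermonde z).transpose.mulVec c = 0 := by
      funext j
      simp only [Matrix.mulVec, dotProduct, Matrix.transpose_apply,
        Matrix.vandermonde_apply, Pi.zero_apply]
      rw [← hz (j : ℕ)]
      refine Finset.sum_congr rfl fun i _ => ?_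
      ring
    have hdet : (Matrix.vandermonde z).transpose.det ≠ 0 := by
      rw [Matrix.det_transpose]
      exact Matrix.det_vandermonde_ne_zero_iff.mpr hy
    exact hc (Matrix.eq_zero_of_mulVec_eq_zero hdet hmv)
  obtain ⟨m₀, hm₀⟩ := hkey
  -- summability
  have hsum : ∀ i j : Fin n, Summable (fun m : ℕ => c i * conj (c j) * g i j ^ m) :=
    fun i j => (summable_geometric_of_norm_lt_one (hg i j)).mul_left _
  have hsum2 : ∀ i : Fin n, Summable (fun m : ℕ => ∑ j, c i * conj (c j) * g i j ^ m) :=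
    fun i => summable_sum fun j _ => hsum i j
  have hS : ∑ i, ∑ j, c i * conj (c j) * (1 - ⟪x j, x i⟫_ℂ)⁻¹
      = ∑' m : ℕ, ∑ i, ∑ j, c i * conj (c j) * g i j ^ m := by
    rw [Summable.tsum_finsetSum fun i _ => hsum2 i]
    refine Finset.sum_congr rfl fun i _ => ?_
    rw [Summable.tsum_finsetSum fun j _ => hsum i j]
    refine Finset.sum_congr rfl fun j _ => ?_
    rw [← tsum_geometric_of_norm_lt_one (hg i j), tsum_mul_left]
  have hgoal : ∑ i, ∑ j, c i * conj (c j) * (1 - ⟪x j, x i⟫_ℂ)⁻¹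
      = ((∑' m : ℕ, ‖w m‖ ^ 2 : ℝ) : ℂ) := by
    rw [hS]
    have : (fun m : ℕ => ∑ i, ∑ j, c i * conj (c j) * g i j ^ m)
        = fun m : ℕ => ((‖w m‖ ^ 2 : ℝ) : ℂ) := funext hQ
    rw [this, Complex.ofReal_tsum]
  have hrsum : Summable fun m : ℕ => (‖w m‖ ^ 2 : ℝ) := by
    have h1 : Summable fun m : ℕ => ∑ i, ∑ j, c i * conj (c j) * g i j ^ m :=
      summable_sum fun i _ => hsum2 i
    have : (fun m : ℕ => ∑ i, ∑ j, c i * conj (c j) * g i j ^ m)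
        = fun m : ℕ => ((‖w m‖ ^ 2 : ℝ) : ℂ) := funext hQ
    rw [this] at h1
    exact Complex.summable_ofReal.mp h1
  have hpos : (0 : ℝ) < ∑' m : ℕ, ‖w m‖ ^ 2 := by
    refine Summable.tsum_pos hrsum (fun m => sq_nonneg _) m₀ ?_
    exact pow_pos (norm_pos_iff.mpr hm₀) 2
  simp only []
  rw [hgoal]
  exact_mod_cast hpos
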